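/- Let p ≥ 1 and ρ ≥ 0. Let J be a square quaternion matrix that is block diagonal (via blockDiagonal') of Jordan blocks J_{n_t}(λ_t), where each λ_t ∈ ℂ (regarded as a quaternion) satisfies |λ_t| = ρ and each block size satisfies n_t ≤ p. Let H be a quaternion matrix of the same size, let U_s, U_d be quaternion matrices with matching column dimension, and let η_s, η_d be quaternion vectors of matching dimension. Then there exists C > 0 such that for every k ≥ 2p: (a) ‖U_s·J^k·η_s‖₂ ≤ C·k^{p−1}·ρ^k, and (b) ‖U_d·J^k·η_s + U_s·J^k·η_d + U_s·(∑_{i=0}^{k−1} J^i·H·J^{k−1−i})·η_s‖₂ ≤ C·k^{2p−1}·ρ^{k−1}. (These are the 2-norms of the standard and dual parts of Û·(J + H·ε)^k·η̂ where Û = U_s + U_d·ε and η̂ = η_s + η_d·ε.) -/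

import Mathlib

local notation "ℍ" => Quaternion ℝ

/-- The `m × m` Jordan block with `l` on the diagonal and `1` on the superdiagonal. -/
def Jb {R : Type*} [Zero R] [One R] (m : ℕ) (l : R) : Matrix (Fin m) (Fin m) R :=
  Matrix.of fun i j =>
    if (j : ℕ) = (i : ℕ) then l else if (j : ℕ) = (i : ℕ) + 1 then 1 else 0

/-- The Euclidean 2-norm of a quaternion vector. -/
noncomputable def qnorm {ι : Type*} [Fintype ι] (u : ι → ℍ) : ℝ :=
  Real.sqrt (∑ i, ‖u i‖ ^ 2)

/-- Block diagonal matrix of Jordan blocks `J_{sz t}(lam t)` with complex eigenvalues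
regarded as quaternions. -/
noncomputable def jordanBlockDiag {T : ℕ} (sz : Fin T → ℕ) (lam : Fin T → ℂ) :
    Matrix ((t : Fin T) × Fin (sz t)) ((t : Fin T) × Fin (sz t)) ℍ :=
  Matrix.blockDiagonal' fun t => Jb (sz t) (⟨(lam t).re, (lam t).im, 0, 0⟩ : ℍ)

open Matrix Finset

attribute [local instance] Matrix.linftyOpSeminormedAddCommGroup

lemma aux_norm_coeComplex (z : ℂ) : ‖(Quaternion.coeComplex z)‖ = ‖z‖ := by
  rw [norm_eq_sqrt_real_inner, Quaternion.inner_self, Complex.norm_def]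
  congr 1
  simp [Quaternion.normSq_def', Complex.normSq_apply]
  ring

lemma aux_Jb_pow_apply_eq_zero {m : ℕ} : ∀ (d : ℕ) (i j : Fin m), (j : ℕ) < (i : ℕ) + d →
    ((Jb m (0:ℍ)) ^ d) i j = 0 := by
  intro d
  induction d with
  | zero =>
    intro i j h
    simp only [pow_zero]
    exact Matrix.one_apply_ne (by intro he; subst he; omega)
  | succ d ih =>
    intro i j h
    rw [pow_succ, Matrix.mul_apply]
    refine Finset.sum_eq_zero fun l _ => ?_
    by_cases hl : (j : ℕ) = (l : ℕ) + 1
    · rw [ih i l (by omega), zero_mul]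
    · have : Jb m (0:ℍ) l j = 0 := by
        simp only [Jb, Matrix.of_apply]
        split_ifs <;> simp_all
      rw [this, mul_zero]

lemma aux_Jb_pow_self {m : ℕ} : (Jb m (0:ℍ)) ^ m = 0 :=
  Matrix.ext fun i j => aux_Jb_pow_apply_eq_zero m i j (by omega)

lemma aux_norm_one_le {n : Type*} [Fintype n] [DecidableEq n] : ‖(1 : Matrix n n ℍ)‖ ≤ 1 := by
  rw [← Matrix.diagonal_one, Matrix.linfty_opNorm_diagonal]
  exact (pi_norm_le_iff_of_nonneg zero_le_one).2 fun i => by simp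

lemma aux_qnorm_le {ι : Type*} [Fintype ι] (u : ι → ℍ) :
    qnorm u ≤ Real.sqrt (Fintype.card ι) * ‖u‖ := by
  rw [qnorm, ← Real.sqrt_sq (norm_nonneg u), ← Real.sqrt_mul (by positivity)]
  apply Real.sqrt_le_sqrt
  calc ∑ i, ‖u i‖ ^ 2 ≤ ∑ _i : ι, ‖u‖ ^ 2 := by
        refine Finset.sum_le_sum fun i _ => ?_
        have h := norm_le_pi_norm u i
        nlinarith [norm_nonneg (u i)]
    _ = (Fintype.card ι) * ‖u‖ ^ 2 := by
        rw [Finset.sum_const, Finset.card_univ, nsmul_eq_mul]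

set_option maxHeartbeats 2000000 in
theorem stmt11 {T N : ℕ} (p : ℕ) (hp : 1 ≤ p) (ρ : ℝ) (hρ : 0 ≤ ρ)
    (sz : Fin T → ℕ) (lam : Fin T → ℂ)
    (hlam : ∀ t, ‖lam t‖ = ρ) (hsz : ∀ t, sz t ≤ p)
    (H : Matrix ((t : Fin T) × Fin (sz t)) ((t : Fin T) × Fin (sz t)) ℍ)
    (Us Ud : Matrix (Fin N) ((t : Fin T) × Fin (sz t)) ℍ)
    (ηs ηd : ((t : Fin T) × Fin (sz t)) → ℍ) :
    ∃ C > (0 : ℝ), ∀ k : ℕ, 2 * p ≤ k →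
      qnorm ((Us * jordanBlockDiag sz lam ^ k).mulVec ηs) ≤
          C * (k : ℝ) ^ (p - 1) * ρ ^ k ∧
        qnorm ((Ud * jordanBlockDiag sz lam ^ k).mulVec ηs +
            (Us * jordanBlockDiag sz lam ^ k).mulVec ηd +
            (Us * ∑ i ∈ Finset.range k,
              jordanBlockDiag sz lam ^ i * H * jordanBlockDiag sz lam ^ (k - 1 - i)).mulVec ηs) ≤
          C * (k : ℝ) ^ (2 * p - 1) * ρ ^ (k - 1) := by
  classical
  set D : Matrix ((t : Fin T) × Fin (sz t)) ((t : Fin T) × Fin (sz t)) ℍ :=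
    Matrix.diagonal fun x => Quaternion.coeComplex (lam x.1) with hDdef
  set Nm : Matrix ((t : Fin T) × Fin (sz t)) ((t : Fin T) × Fin (sz t)) ℍ :=
    Matrix.blockDiagonal' fun t => Jb (sz t) (0:ℍ) with hNdef
  -- decomposition
  have hJDN : jordanBlockDiag sz lam = D + Nm := by
    refine Matrix.ext fun x y => ?_
    obtain ⟨t, i⟩ := x
    obtain ⟨t', j⟩ := y
    rcases eq_or_ne t t' with rfl | ht
    · simp only [jordanBlockDiag, hDdef, hNdef, Matrix.blockDiagonal'_apply_eq,
        Matrix.add_apply, Jb, Matrix.of_apply, Matrix.diagonal_apply]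
      rcases eq_or_ne i j with rfl | hij
      · simp [Quaternion.coeComplex]; exact (add_zero _).symm
      · have h1 : (⟨t, i⟩ : (t : Fin T) × Fin (sz t)) ≠ ⟨t, j⟩ := by
          simp [Sigma.mk.inj_iff, hij]
        have h2 : (j : ℕ) ≠ (i : ℕ) := fun h => hij (Fin.ext h.symm)
        simp [h1, h2]
    · have h1 : (⟨t, i⟩ : (t : Fin T) × Fin (sz t)) ≠ ⟨t', j⟩ := by
        simp [Sigma.mk.inj_iff, ht]
      simp [jordanBlockDiag, hDdef, hNdef, Matrix.blockDiagonal'_apply_ne _ _ _ ht, h1]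
  -- commutation
  have hcomm : Commute D Nm := by
    unfold Commute SemiconjBy
    refine Matrix.ext fun x y => ?_
    obtain ⟨t, i⟩ := x
    obtain ⟨t', j⟩ := y
    simp only [hDdef, Matrix.diagonal_mul, Matrix.mul_diagonal]
    rcases eq_or_ne t t' with rfl | ht
    · have hE : Nm ⟨t, i⟩ ⟨t, j⟩ = Jb (sz t) (0:ℍ) i j := by
        simp [hNdef, Matrix.blockDiagonal'_apply_eq]
      rw [hE]
      simp only [Jb, Matrix.of_apply]
      split_ifs <;> simp
    · have hE : Nm ⟨t, i⟩ ⟨t', j⟩ = 0 := Matrix.blockDiagonal'_apply_ne _ _ _ ht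
      rw [hE, mul_zero, zero_mul]
  -- nilpotency
  have hNp : Nm ^ p = 0 := by
    rw [hNdef, ← Matrix.blockDiagonal'_pow]
    have : ((fun t => Jb (sz t) (0:ℍ)) ^ p) = fun _ => (0 : Matrix _ _ ℍ) := by
      funext t
      rw [Pi.pow_apply]
      have h1 : sz t + (p - sz t) = p := by have := hsz t; omega
      rw [← h1, pow_add, aux_Jb_pow_self, zero_mul]
    rw [this]
    exact Matrix.blockDiagonal'_zero
  -- norms of powers
  have hD : ∀ m : ℕ, ‖D ^ m‖ ≤ ρ ^ m := by
    intro m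
    rw [hDdef, Matrix.diagonal_pow, Matrix.linfty_opNorm_diagonal]
    refine (pi_norm_le_iff_of_nonneg (by positivity)).2 fun x => ?_
    rw [Pi.pow_apply, norm_pow, aux_norm_coeComplex, hlam]
  set mN : ℝ := max ‖Nm‖ 1 with hmNdef
  have hmN1 : 1 ≤ mN := le_max_right _ _
  have hN : ∀ d : ℕ, ‖Nm ^ d‖ ≤ mN ^ d := by
    intro d
    induction d with
    | zero => rw [pow_zero, pow_zero]; exact aux_norm_one_le
    | succ d ih =>
      rw [pow_succ, pow_succ]
      calc ‖Nm ^ d * Nm‖ ≤ ‖Nm ^ d‖ * ‖Nm‖ := Matrix.linfty_opNorm_mul _ _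
        _ ≤ mN ^ d * mN :=
          mul_le_mul ih (le_max_left _ _) (norm_nonneg _) (by positivity)
  set mR : ℝ := max ρ 1 with hmRdef
  have hmR1 : 1 ≤ mR := le_max_right _ _
  set mI : ℝ := max ρ⁻¹ 1 with hmIdef
  have hmI1 : 1 ≤ mI := le_max_right _ _
  set C0 : ℝ := p * (mR ^ (p-1) * mN ^ (p-1)) with hC0def
  have hC0 : 0 < C0 := by positivity
  -- key estimate
  have hkey : ∀ k : ℕ, ‖jordanBlockDiag sz lam ^ k‖ ≤
      C0 * ((k:ℝ)+1) ^ (p-1) * ρ ^ (k-(p-1)) := by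
    intro k
    rw [hJDN, hcomm.add_pow]
    set g : ℝ := mR ^ (p-1) * mN ^ (p-1) * (((k:ℝ)+1) ^ (p-1) * ρ ^ (k-(p-1))) with hgdef
    have hg : 0 ≤ g := by positivity
    calc ‖∑ m ∈ Finset.range (k+1), D ^ m * Nm ^ (k-m) * (k.choose m : Matrix _ _ ℍ)‖
        ≤ ∑ m ∈ Finset.range (k+1), ‖D ^ m * Nm ^ (k-m) * (k.choose m : Matrix _ _ ℍ)‖ :=
          norm_sum_le _ _
      _ ≤ ∑ m ∈ Finset.range (k+1), (if k - m < p then g else 0) := by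
          refine Finset.sum_le_sum fun m hm => ?_
          rw [Finset.mem_range] at hm
          by_cases hd : k - m < p
          · simp only [hd, if_true]
            have hcast : D ^ m * Nm ^ (k-m) * (k.choose m : Matrix _ _ ℍ) =
                (k.choose m) • (D ^ m * Nm ^ (k-m)) := by
              rw [← (Nat.cast_commute (k.choose m) (D ^ m * Nm ^ (k-m))).eq, ← nsmul_eq_mul]
            rw [hcast]
            have h1 : ‖(k.choose m) • (D ^ m * Nm ^ (k-m))‖ ≤
                (k.choose m : ℝ) * ‖D ^ m * Nm ^ (k-m)‖ := norm_nsmul_le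
            have hc : (k.choose m : ℝ) ≤ ((k:ℝ)+1) ^ (p-1) := by
              have h2 : k.choose m ≤ (k+1) ^ (p-1) := by
                calc k.choose m = k.choose (k-m) := by
                      rw [Nat.choose_symm (by omega)]
                  _ ≤ k ^ (k-m) := Nat.choose_le_pow _ _
                  _ ≤ (k+1) ^ (k-m) := Nat.pow_le_pow_left (by omega) _
                  _ ≤ (k+1) ^ (p-1) := Nat.pow_le_pow_right (by omega) (by omega)
              calc (k.choose m : ℝ) ≤ (((k+1) ^ (p-1) : ℕ) : ℝ) := Nat.cast_le.2 h2
                _ = ((k:ℝ)+1) ^ (p-1) := by push_cast; ring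
            have hDm : ‖D ^ m‖ ≤ mR ^ (p-1) * ρ ^ (k-(p-1)) := by
              refine (hD m).trans ?_
              have hm2 : m = (k-(p-1)) + (m - (k-(p-1))) := by omega
              rw [hm2, pow_add]
              have h3 : ρ ^ (m - (k-(p-1))) ≤ mR ^ (p-1) := by
                calc ρ ^ (m - (k-(p-1))) ≤ mR ^ (m - (k-(p-1))) :=
                      pow_le_pow_left₀ hρ (le_max_left _ _) _
                  _ ≤ mR ^ (p-1) := pow_le_pow_right₀ hmR1 (by omega)
              calc ρ ^ (k-(p-1)) * ρ ^ (m - (k-(p-1)))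
                  ≤ ρ ^ (k-(p-1)) * mR ^ (p-1) :=
                    mul_le_mul_of_nonneg_left h3 (by positivity)
                _ = mR ^ (p-1) * ρ ^ (k-(p-1)) := by ring
            have hNd : ‖Nm ^ (k-m)‖ ≤ mN ^ (p-1) :=
              (hN _).trans (pow_le_pow_right₀ hmN1 (by omega))
            calc ‖(k.choose m) • (D ^ m * Nm ^ (k-m))‖
                ≤ (k.choose m : ℝ) * ‖D ^ m * Nm ^ (k-m)‖ := h1
              _ ≤ (k.choose m : ℝ) * (‖D ^ m‖ * ‖Nm ^ (k-m)‖) := by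
                  have := Matrix.linfty_opNorm_mul (D ^ m) (Nm ^ (k-m))
                  exact mul_le_mul_of_nonneg_left this (by positivity)
              _ ≤ ((k:ℝ)+1) ^ (p-1) * ((mR ^ (p-1) * ρ ^ (k-(p-1))) * mN ^ (p-1)) := by
                  refine mul_le_mul hc ?_ (by positivity) (by positivity)
                  exact mul_le_mul hDm hNd (norm_nonneg _) (by positivity)
              _ = g := by rw [hgdef]; ring
          · simp only [hd, if_false]
            have hd' : p ≤ k - m := by omega
            have hz : Nm ^ (k-m) = 0 := by
              have : k - m = p + (k - m - p) := by omega
              rw [this, pow_add, hNp, zero_mul]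
            rw [hz, mul_zero, zero_mul, norm_zero]
      _ = ((Finset.range (k+1)).filter (fun m => k - m < p)).card • g := by
          rw [← Finset.sum_filter, Finset.sum_const]
      _ ≤ p * g := by
          rw [nsmul_eq_mul]
          refine mul_le_mul_of_nonneg_right ?_ hg
          have hsub : (Finset.range (k+1)).filter (fun m => k - m < p) ⊆
              Finset.Ico (k+1-p) (k+1) := by
            intro m hm
            simp only [Finset.mem_filter, Finset.mem_range] at hm
            simp only [Finset.mem_Ico]
            omega
          have := Finset.card_le_card hsub
          rw [Nat.card_Ico] at this
          calc (((Finset.range (k+1)).filter (fun m => k - m < p)).card : ℝ)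
              ≤ (((k+1) - (k+1-p) : ℕ) : ℝ) := Nat.cast_le.2 this
            _ ≤ p := Nat.cast_le.2 (by omega)
      _ = C0 * ((k:ℝ)+1) ^ (p-1) * ρ ^ (k-(p-1)) := by rw [hgdef, hC0def]; ring
  -- rho manipulation
  have hrho : ∀ e jj m JJ : ℕ, e + jj = m → 1 ≤ e → jj ≤ JJ →
      ρ ^ e ≤ mI ^ JJ * ρ ^ m := by
    intro e jj m JJ hm he hj
    rcases eq_or_lt_of_le hρ with h0 | h0
    · rw [← h0]
      rw [zero_pow (by omega), zero_pow (by omega : m ≠ 0)]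
      · simp
    · have h1 : (ρ⁻¹) ^ jj * ρ ^ jj = 1 := by
        rw [← mul_pow, inv_mul_cancel₀ (ne_of_gt h0), one_pow]
      have h2 : (ρ⁻¹ : ℝ) ^ jj ≤ mI ^ JJ := by
        calc (ρ⁻¹ : ℝ) ^ jj ≤ mI ^ jj := pow_le_pow_left₀ (by positivity) (le_max_left _ _) _
          _ ≤ mI ^ JJ := pow_le_pow_right₀ hmI1 hj
      calc ρ ^ e = ((ρ⁻¹) ^ jj * ρ ^ jj) * ρ ^ e := by rw [h1, one_mul]
        _ = (ρ⁻¹) ^ jj * ρ ^ m := by rw [← hm, pow_add]; ring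
        _ ≤ mI ^ JJ * ρ ^ m := mul_le_mul_of_nonneg_right h2 (by positivity)
  -- final assembly
  set Jm := jordanBlockDiag sz lam with hJmdef
  set sqN : ℝ := Real.sqrt N with hsqNdef
  have hsqN : 0 ≤ sqN := Real.sqrt_nonneg _
  set Ca : ℝ := sqN * ‖Us‖ * ‖ηs‖ * (C0 * 2 ^ (p-1) * mI ^ (p-1)) with hCadef
  set Cj : ℝ := C0 * 2 ^ (p-1) * mI ^ (p-1) * mR with hCjdef
  have hCj : 0 < Cj := by positivity
  set Cb : ℝ := sqN * ((‖Ud‖ * ‖ηs‖ + ‖Us‖ * ‖ηd‖) * Cj +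
      ‖Us‖ * ‖H‖ * ‖ηs‖ * (C0 ^ 2 * mI ^ (2*p-2))) with hCbdef
  have hCa : 0 ≤ Ca := by positivity
  have hCb : 0 ≤ Cb := by positivity
  refine ⟨Ca + Cb + 1, by positivity, fun k hk => ?_⟩
  have hk1 : (1:ℝ) ≤ (k:ℝ) := by
    have : 1 ≤ k := by omega
    exact_mod_cast this
  have hk0 : 0 ≤ (k:ℝ) := by linarith
  -- sharpened key bounds at exponent k
  have hJk1 : ‖Jm ^ k‖ ≤ C0 * 2 ^ (p-1) * mI ^ (p-1) * ((k:ℝ) ^ (p-1) * ρ ^ k) := by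
    refine (hkey k).trans ?_
    have h1 : ((k:ℝ)+1) ^ (p-1) ≤ 2 ^ (p-1) * (k:ℝ) ^ (p-1) := by
      rw [← mul_pow]
      exact pow_le_pow_left₀ (by linarith) (by linarith) _
    have h2 : ρ ^ (k-(p-1)) ≤ mI ^ (p-1) * ρ ^ k :=
      hrho (k-(p-1)) (p-1) k (p-1) (by omega) (by omega) le_rfl
    calc C0 * ((k:ℝ)+1) ^ (p-1) * ρ ^ (k-(p-1))
        ≤ C0 * (2 ^ (p-1) * (k:ℝ) ^ (p-1)) * (mI ^ (p-1) * ρ ^ k) := by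
          refine mul_le_mul ?_ h2 (by positivity) (by positivity)
          exact mul_le_mul_of_nonneg_left h1 (le_of_lt hC0)
      _ = C0 * 2 ^ (p-1) * mI ^ (p-1) * ((k:ℝ) ^ (p-1) * ρ ^ k) := by ring
  have hrk : ρ ^ k ≤ mR * ρ ^ (k-1) := by
    have hk' : k = 1 + (k-1) := by omega
    calc ρ ^ k = ρ * ρ ^ (k-1) := by
          conv_lhs => rw [hk']
          rw [pow_add, pow_one]
      _ ≤ mR * ρ ^ (k-1) := mul_le_mul_of_nonneg_right (le_max_left _ _) (by positivity)
  have hJk2 : ‖Jm ^ k‖ ≤ Cj * ((k:ℝ) ^ (2*p-1) * ρ ^ (k-1)) := by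
    refine hJk1.trans ?_
    have h1 : (k:ℝ) ^ (p-1) ≤ (k:ℝ) ^ (2*p-1) := pow_le_pow_right₀ hk1 (by omega)
    calc C0 * 2 ^ (p-1) * mI ^ (p-1) * ((k:ℝ) ^ (p-1) * ρ ^ k)
        ≤ C0 * 2 ^ (p-1) * mI ^ (p-1) * ((k:ℝ) ^ (2*p-1) * (mR * ρ ^ (k-1))) := by
          refine mul_le_mul_of_nonneg_left ?_ (by positivity)
          exact mul_le_mul h1 hrk (by positivity) (by positivity)
      _ = Cj * ((k:ℝ) ^ (2*p-1) * ρ ^ (k-1)) := by rw [hCjdef]; ring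
  constructor
  · -- part (a)
    have ha : qnorm ((Us * Jm ^ k).mulVec ηs) ≤ Ca * ((k:ℝ) ^ (p-1) * ρ ^ k) := by
      have h0 := aux_qnorm_le ((Us * Jm ^ k).mulVec ηs)
      rw [Fintype.card_fin] at h0
      refine h0.trans ?_
      calc sqN * ‖(Us * Jm ^ k).mulVec ηs‖
          ≤ sqN * (‖Us * Jm ^ k‖ * ‖ηs‖) :=
            mul_le_mul_of_nonneg_left (Matrix.linfty_opNorm_mulVec _ _) hsqN
        _ ≤ sqN * ((‖Us‖ * ‖Jm ^ k‖) * ‖ηs‖) := by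
            refine mul_le_mul_of_nonneg_left ?_ hsqN
            exact mul_le_mul_of_nonneg_right (Matrix.linfty_opNorm_mul _ _) (norm_nonneg _)
        _ ≤ sqN * ((‖Us‖ * (C0 * 2 ^ (p-1) * mI ^ (p-1) * ((k:ℝ) ^ (p-1) * ρ ^ k))) * ‖ηs‖) := by
            refine mul_le_mul_of_nonneg_left ?_ hsqN
            refine mul_le_mul_of_nonneg_right ?_ (norm_nonneg _)
            exact mul_le_mul_of_nonneg_left hJk1 (norm_nonneg _)
        _ = Ca * ((k:ℝ) ^ (p-1) * ρ ^ k) := by rw [hCadef]; ring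
    calc qnorm ((Us * Jm ^ k).mulVec ηs) ≤ Ca * ((k:ℝ) ^ (p-1) * ρ ^ k) := ha
      _ ≤ (Ca + Cb + 1) * ((k:ℝ) ^ (p-1) * ρ ^ k) := by
          refine mul_le_mul_of_nonneg_right (by linarith) (by positivity)
      _ = (Ca + Cb + 1) * (k:ℝ) ^ (p-1) * ρ ^ k := by ring
  · -- part (b)
    set u1 := (Ud * Jm ^ k).mulVec ηs with hu1
    set u2 := (Us * Jm ^ k).mulVec ηd with hu2
    set u3 := (Us * ∑ i ∈ Finset.range k, Jm ^ i * H * Jm ^ (k - 1 - i)).mulVec ηs with hu3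
    have hb1 : ‖u1‖ ≤ ‖Ud‖ * ‖ηs‖ * (Cj * ((k:ℝ) ^ (2*p-1) * ρ ^ (k-1))) := by
      calc ‖u1‖ ≤ ‖Ud * Jm ^ k‖ * ‖ηs‖ := Matrix.linfty_opNorm_mulVec _ _
        _ ≤ (‖Ud‖ * ‖Jm ^ k‖) * ‖ηs‖ :=
            mul_le_mul_of_nonneg_right (Matrix.linfty_opNorm_mul _ _) (norm_nonneg _)
        _ ≤ (‖Ud‖ * (Cj * ((k:ℝ) ^ (2*p-1) * ρ ^ (k-1)))) * ‖ηs‖ := by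
            refine mul_le_mul_of_nonneg_right ?_ (norm_nonneg _)
            exact mul_le_mul_of_nonneg_left hJk2 (norm_nonneg _)
        _ = ‖Ud‖ * ‖ηs‖ * (Cj * ((k:ℝ) ^ (2*p-1) * ρ ^ (k-1))) := by ring
    have hb2 : ‖u2‖ ≤ ‖Us‖ * ‖ηd‖ * (Cj * ((k:ℝ) ^ (2*p-1) * ρ ^ (k-1))) := by
      calc ‖u2‖ ≤ ‖Us * Jm ^ k‖ * ‖ηd‖ := Matrix.linfty_opNorm_mulVec _ _
        _ ≤ (‖Us‖ * ‖Jm ^ k‖) * ‖ηd‖ :=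
            mul_le_mul_of_nonneg_right (Matrix.linfty_opNorm_mul _ _) (norm_nonneg _)
        _ ≤ (‖Us‖ * (Cj * ((k:ℝ) ^ (2*p-1) * ρ ^ (k-1)))) * ‖ηd‖ := by
            refine mul_le_mul_of_nonneg_right ?_ (norm_nonneg _)
            exact mul_le_mul_of_nonneg_left hJk2 (norm_nonneg _)
        _ = ‖Us‖ * ‖ηd‖ * (Cj * ((k:ℝ) ^ (2*p-1) * ρ ^ (k-1))) := by ring
    have hsum : ‖∑ i ∈ Finset.range k, Jm ^ i * H * Jm ^ (k - 1 - i)‖ ≤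
        ‖H‖ * (C0 ^ 2 * mI ^ (2*p-2)) * ((k:ℝ) ^ (2*p-1) * ρ ^ (k-1)) := by
      set g2 : ℝ := ‖H‖ * (C0 ^ 2 * mI ^ (2*p-2)) * ((k:ℝ) ^ (2*p-2) * ρ ^ (k-1)) with hg2def
      have hterm : ∀ i ∈ Finset.range k, ‖Jm ^ i * H * Jm ^ (k - 1 - i)‖ ≤ g2 := by
        intro i hi
        rw [Finset.mem_range] at hi
        have e1 := hkey i
        have e2 := hkey (k - 1 - i)
        have h1 : ‖Jm ^ i * H * Jm ^ (k - 1 - i)‖ ≤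
            (‖Jm ^ i‖ * ‖H‖) * ‖Jm ^ (k - 1 - i)‖ := by
          refine (Matrix.linfty_opNorm_mul _ _).trans ?_
          exact mul_le_mul_of_nonneg_right (Matrix.linfty_opNorm_mul _ _) (norm_nonneg _)
        refine h1.trans ?_
        have hi1 : ((i:ℝ)+1) ^ (p-1) ≤ (k:ℝ) ^ (p-1) := by
          refine pow_le_pow_left₀ (by positivity) ?_ _
          have : (i:ℝ) + 1 ≤ (k:ℝ) := by exact_mod_cast Nat.succ_le_of_lt hi
          linarith
        have hi2 : (((k-1-i : ℕ):ℝ)+1) ^ (p-1) ≤ (k:ℝ) ^ (p-1) := by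
          refine pow_le_pow_left₀ (by positivity) ?_ _
          have h3 : (k-1-i) + 1 ≤ k := by omega
          exact_mod_cast h3
        have hρe : ρ ^ (i-(p-1)) * ρ ^ ((k-1-i)-(p-1)) ≤ mI ^ (2*p-2) * ρ ^ (k-1) := by
          rw [← pow_add]
          exact hrho _ ((k-1) - ((i-(p-1)) + ((k-1-i)-(p-1)))) (k-1) (2*p-2)
            (by omega) (by omega) (by omega)
        calc (‖Jm ^ i‖ * ‖H‖) * ‖Jm ^ (k - 1 - i)‖
            ≤ ((C0 * ((i:ℝ)+1) ^ (p-1) * ρ ^ (i-(p-1))) * ‖H‖) *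
              (C0 * (((k-1-i:ℕ):ℝ)+1) ^ (p-1) * ρ ^ ((k-1-i)-(p-1))) := by
              refine mul_le_mul ?_ e2 (norm_nonneg _) (by positivity)
              exact mul_le_mul_of_nonneg_right e1 (norm_nonneg _)
          _ = (C0 ^ 2 * ‖H‖) * ((((i:ℝ)+1) ^ (p-1)) * ((((k-1-i:ℕ):ℝ)+1) ^ (p-1))) *
              (ρ ^ (i-(p-1)) * ρ ^ ((k-1-i)-(p-1))) := by ring
          _ ≤ (C0 ^ 2 * ‖H‖) * ((k:ℝ) ^ (p-1) * (k:ℝ) ^ (p-1)) * (mI ^ (2*p-2) * ρ ^ (k-1)) := by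
              refine mul_le_mul ?_ hρe (by positivity) (by positivity)
              refine mul_le_mul_of_nonneg_left ?_ (by positivity)
              exact mul_le_mul hi1 hi2 (by positivity) (by positivity)
          _ = g2 := by
              rw [hg2def, ← pow_add]
              have : (p-1) + (p-1) = 2*p-2 := by omega
              rw [this]; ring
      have hg2 : 0 ≤ g2 := by positivity
      calc ‖∑ i ∈ Finset.range k, Jm ^ i * H * Jm ^ (k - 1 - i)‖
          ≤ ∑ i ∈ Finset.range k, ‖Jm ^ i * H * Jm ^ (k - 1 - i)‖ := norm_sum_le _ _
        _ ≤ ∑ _i ∈ Finset.range k, g2 := Finset.sum_le_sum hterm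
        _ = (k:ℝ) * g2 := by rw [Finset.sum_const, Finset.card_range, nsmul_eq_mul]
        _ = ‖H‖ * (C0 ^ 2 * mI ^ (2*p-2)) * (((k:ℝ) * (k:ℝ) ^ (2*p-2)) * ρ ^ (k-1)) := by
            rw [hg2def]; ring
        _ = ‖H‖ * (C0 ^ 2 * mI ^ (2*p-2)) * ((k:ℝ) ^ (2*p-1) * ρ ^ (k-1)) := by
            have : 2*p-1 = (2*p-2) + 1 := by omega
            rw [this, pow_succ]; ring
    have hb3 : ‖u3‖ ≤ ‖Us‖ * ‖H‖ * ‖ηs‖ * (C0 ^ 2 * mI ^ (2*p-2)) *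
        ((k:ℝ) ^ (2*p-1) * ρ ^ (k-1)) := by
      calc ‖u3‖ ≤ ‖Us * ∑ i ∈ Finset.range k, Jm ^ i * H * Jm ^ (k - 1 - i)‖ * ‖ηs‖ :=
            Matrix.linfty_opNorm_mulVec _ _
        _ ≤ (‖Us‖ * ‖∑ i ∈ Finset.range k, Jm ^ i * H * Jm ^ (k - 1 - i)‖) * ‖ηs‖ :=
            mul_le_mul_of_nonneg_right (Matrix.linfty_opNorm_mul _ _) (norm_nonneg _)
        _ ≤ (‖Us‖ * (‖H‖ * (C0 ^ 2 * mI ^ (2*p-2)) * ((k:ℝ) ^ (2*p-1) * ρ ^ (k-1)))) * ‖ηs‖ := by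
            refine mul_le_mul_of_nonneg_right ?_ (norm_nonneg _)
            exact mul_le_mul_of_nonneg_left hsum (norm_nonneg _)
        _ = ‖Us‖ * ‖H‖ * ‖ηs‖ * (C0 ^ 2 * mI ^ (2*p-2)) * ((k:ℝ) ^ (2*p-1) * ρ ^ (k-1)) := by
            ring
    have h0 := aux_qnorm_le (u1 + u2 + u3)
    rw [Fintype.card_fin] at h0
    calc qnorm (u1 + u2 + u3) ≤ sqN * ‖u1 + u2 + u3‖ := h0
      _ ≤ sqN * (‖u1‖ + ‖u2‖ + ‖u3‖) := by
          refine mul_le_mul_of_nonneg_left ?_ hsqN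
          calc ‖u1 + u2 + u3‖ ≤ ‖u1 + u2‖ + ‖u3‖ := norm_add_le _ _
            _ ≤ ‖u1‖ + ‖u2‖ + ‖u3‖ := by
                have := norm_add_le u1 u2
                linarith
      _ ≤ Cb * ((k:ℝ) ^ (2*p-1) * ρ ^ (k-1)) := by
          rw [hCbdef]
          have hx : (0:ℝ) ≤ (k:ℝ) ^ (2*p-1) * ρ ^ (k-1) := by positivity
          nlinarith [hb1, hb2, hb3, hsqN, norm_nonneg u1, norm_nonneg u2, norm_nonneg u3]
      _ ≤ (Ca + Cb + 1) * ((k:ℝ) ^ (2*p-1) * ρ ^ (k-1)) := by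
          refine mul_le_mul_of_nonneg_right (by linarith) (by positivity)
      _ = (Ca + Cb + 1) * (k:ℝ) ^ (2*p-1) * ρ ^ (k-1) := by ring
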